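/- Subsumption restricted to acyclic TFSs is well-founded: there is no infinite strictly decreasing sequence A₀ ⊐ A₁ ⊐ A₂ ⊐ ⋯ of acyclic TFSs. -/

import Mathlib

/-! Typed feature structures (TFSs), following Carpenter 1992.
`pathδ` extends the partial transition function `δ` to paths (lists of features). -/

variable {Nodes Feats Types : Type}

def pathδ (δ : Nodes → Feats → Option Nodes) : Nodes → List Feats → Option Nodes
  | q, [] => some q
  | q, f :: π => (δ q f).bind fun q' => pathδ δ q' π

/-- A typed feature structure: a finite set of nodes `Q`, a root, and a partial
transition function `δ : Q × Feats ⇀ Q` (modelled as `none` outside its domain,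
undefined outside `Q`), with every node reachable from the root. -/
structure TFS (Nodes Feats : Type) where
  Q : Finset Nodes
  root : Nodes
  root_mem : root ∈ Q
  δ : Nodes → Feats → Option Nodes
  dom : ∀ q f, (δ q f).isSome → q ∈ Q
  closed : ∀ q f q', δ q f = some q' → q' ∈ Q
  reach : ∀ q ∈ Q, ∃ π : List Feats, pathδ δ root π = some q

/-- The set of paths defined from the root of `A`. -/
def TFS.Pi (A : TFS Nodes Feats) : Set (List Feats) :=
  {π | (pathδ A.δ A.root π).isSome}

/-- `A` is cyclic if some node returns to itself along a nonempty path. -/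
def TFS.Cyclic (A : TFS Nodes Feats) : Prop :=
  ∃ q ∈ A.Q, ∃ α : List Feats, α ≠ [] ∧ pathδ A.δ q α = some q

def TFS.Acyclic (A : TFS Nodes Feats) : Prop := ¬ A.Cyclic

/-- A subsumption morphism from `A` to `B` w.r.t. the typing function `θ`:
maps root to root, maps `Q_A` into `Q_B`, is monotone on node types,
and commutes with the transition function. -/
def IsMorphism [PartialOrder Types] (θ : Nodes → Types)
    (A B : TFS Nodes Feats) (h : Nodes → Nodes) : Prop :=
  h A.root = B.root ∧ (∀ q ∈ A.Q, h q ∈ B.Q) ∧ (∀ q ∈ A.Q, θ q ≤ θ (h q)) ∧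
  ∀ q f q', A.δ q f = some q' → B.δ (h q) f = some (h q')

/-- `A` subsumes `B` iff some subsumption morphism from `A` to `B` exists. -/
def Subsumes [PartialOrder Types] (θ : Nodes → Types) (A B : TFS Nodes Feats) : Prop :=
  ∃ h, IsMorphism θ A B h

/-- Strict subsumption: `A ⊏ B` iff `A ⊑ B` and not `B ⊑ A`. -/
def StrictlySubsumes [PartialOrder Types] (θ : Nodes → Types) (A B : TFS Nodes Feats) : Prop :=
  Subsumes θ A B ∧ ¬ Subsumes θ B A

/-- `Θ(A)`: the sum over paths of the `r`-rank of the type of the node reached. -/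
noncomputable def Theta (r : Types → ℕ) (θ : Nodes → Types) (A : TFS Nodes Feats) : ℕ :=
  ∑ᶠ π ∈ A.Pi, (pathδ A.δ A.root π).elim 0 fun q => r (θ q)

/-- `rank(A) = |Π(A)| + Θ(A) + Δ(A)` where `Δ(A) = |Π(A)| − |Q_A|` (computed in `ℤ`). -/
noncomputable def rank (r : Types → ℕ) (θ : Nodes → Types) (A : TFS Nodes Feats) : ℤ :=
  (A.Pi.ncard : ℤ) + (Theta r θ A : ℤ) + ((A.Pi.ncard : ℤ) - (A.Q.card : ℤ))

section Aux

variable {Nodes Feats Types : Type}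

lemma pathδ_append (δ : Nodes → Feats → Option Nodes) (q : Nodes) (π₁ π₂ : List Feats) :
    pathδ δ q (π₁ ++ π₂) = (pathδ δ q π₁).bind fun p => pathδ δ p π₂ := by
  induction π₁ generalizing q with
  | nil => simp [pathδ]
  | cons f π ih => simp [pathδ, ih, Option.bind_assoc]

lemma pathδ_mem (A : TFS Nodes Feats) : ∀ {π : List Feats} {q p : Nodes}, q ∈ A.Q →
    pathδ A.δ q π = some p → p ∈ A.Q := by
  intro π
  induction π with
  | nil =>
    intro q p hq hp
    obtain rfl := Option.some.inj hp
    exact hq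
  | cons f πt ih =>
    intro q p hq hp
    simp only [pathδ] at hp
    cases hδ : A.δ q f with
    | none => rw [hδ] at hp; simp at hp
    | some q' =>
      rw [hδ] at hp
      simp only [Option.bind_some] at hp
      exact ih (A.closed q f q' hδ) hp

/-- The node reached by a path (defaults to the root for undefined paths). -/
def nod (A : TFS Nodes Feats) (π : List Feats) : Nodes :=
  (pathδ A.δ A.root π).getD A.root

lemma nod_spec {A : TFS Nodes Feats} {π : List Feats} (hπ : π ∈ A.Pi) :
    pathδ A.δ A.root π = some (nod A π) := by
  obtain ⟨q, hq⟩ := Option.isSome_iff_exists.mp hπ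
  simp [nod, hq]

lemma nod_mem {A : TFS Nodes Feats} {π : List Feats} (hπ : π ∈ A.Pi) : nod A π ∈ A.Q :=
  pathδ_mem A A.root_mem (nod_spec hπ)

lemma nod_image (A : TFS Nodes Feats) : nod A '' A.Pi = ↑A.Q := by
  ext q
  constructor
  · rintro ⟨π, hπ, rfl⟩
    exact nod_mem hπ
  · intro hq
    obtain ⟨π, hπ⟩ := A.reach q hq
    have hmem : π ∈ A.Pi := by simp [TFS.Pi, hπ]
    exact ⟨π, hmem, by simp [nod, hπ]⟩

lemma acyclic_pi_finite [Finite Feats] {A : TFS Nodes Feats} (hA : A.Acyclic) :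
    A.Pi.Finite := by
  classical
  apply (List.finite_length_lt Feats A.Q.card).subset
  intro π hπ
  simp only [Set.mem_setOf_eq]
  by_contra hlen
  push_neg at hlen
  have hpre : ∀ i, i ≤ π.length → π.take i ∈ A.Pi := by
    intro i hi
    have hsplit : π = π.take i ++ π.drop i := (List.take_append_drop i π).symm
    have h2 : (pathδ A.δ A.root π).isSome := hπ
    rw [hsplit, pathδ_append] at h2
    cases hp : pathδ A.δ A.root (π.take i) with
    | none => rw [hp] at h2; simp at h2
    | some q => simp [TFS.Pi, hp]
  have main : ∀ i j, i < j → j < A.Q.card + 1 →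
      nod A (π.take i) = nod A (π.take j) → False := by
    intro i j hij hj heq
    have hiπ : i ≤ π.length := by omega
    have hjπ : j ≤ π.length := by omega
    have hpi := nod_spec (hpre i hiπ)
    have hpj := nod_spec (hpre j hjπ)
    rw [← heq] at hpj
    have htake : π.take j = π.take i ++ (π.drop i).take (j - i) := by
      rw [← List.take_add]
      congr 1
      omega
    rw [htake, pathδ_append, hpi] at hpj
    simp only [Option.bind_some] at hpj
    apply hA
    refine ⟨nod A (π.take i), nod_mem (hpre i hiπ), (π.drop i).take (j - i), ?_, hpj⟩
    intro hnil
    have := congrArg List.length hnil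
    simp only [List.length_take, List.length_drop, List.length_nil] at this
    omega
  have hmap : ∀ i ∈ Finset.range (A.Q.card + 1), nod A (π.take i) ∈ A.Q := by
    intro i hi
    simp only [Finset.mem_range] at hi
    exact nod_mem (hpre i (by omega))
  obtain ⟨i, hi, j, hj, hne, heq⟩ :=
    Finset.exists_ne_map_eq_of_card_lt_of_maps_to (by simp) hmap
  simp only [Finset.mem_range] at hi hj
  rcases hne.lt_or_gt with hij | hij
  · exact main i j hij hj heq
  · exact main j i hij hi heq.symm

lemma pathδ_morph [PartialOrder Types] {θ : Nodes → Types} {A B : TFS Nodes Feats}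
    {h : Nodes → Nodes} (hm : IsMorphism θ A B h) :
    ∀ {π : List Feats} {q p : Nodes},
      pathδ A.δ q π = some p → pathδ B.δ (h q) π = some (h p) := by
  intro π
  induction π with
  | nil =>
    intro q p hp
    obtain rfl := Option.some.inj hp
    rfl
  | cons f πt ih =>
    intro q p hp
    simp only [pathδ] at hp ⊢
    cases hδ : A.δ q f with
    | none => rw [hδ] at hp; simp at hp
    | some q' =>
      rw [hδ] at hp
      simp only [Option.bind_some] at hp
      rw [hm.2.2.2 q f q' hδ]
      simp only [Option.bind_some]
      exact ih hp

/-- The summand in `Theta`. -/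
def tmfun (r : Types → ℕ) (θ : Nodes → Types) (C : TFS Nodes Feats) (π : List Feats) : ℕ :=
  (pathδ C.δ C.root π).elim 0 fun q => r (θ q)

lemma card_le_pi_ncard {A : TFS Nodes Feats} (hF : A.Pi.Finite) :
    A.Q.card ≤ A.Pi.ncard := by
  rw [← Set.ncard_coe_finset, ← nod_image A]
  exact Set.ncard_image_le hF

lemma rank_lt_of_strict [Finite Feats] [PartialOrder Types]
    (r : Types → ℕ) (hr : ∀ t t' : Types, t < t' → r t < r t') (θ : Nodes → Types)
    {A B : TFS Nodes Feats} (hA : A.Acyclic) (hB : B.Acyclic)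
    (hs : StrictlySubsumes θ A B) : rank r θ A < rank r θ B := by
  classical
  obtain ⟨⟨h, hm⟩, hnot⟩ := hs
  obtain ⟨hroot, hQ, hθ, hδ⟩ := hm
  have hrle : ∀ t t' : Types, t ≤ t' → r t ≤ r t' := by
    intro t t' htt
    rcases htt.lt_or_eq with hlt | rfl
    · exact (hr _ _ hlt).le
    · exact le_rfl
  have hFA : A.Pi.Finite := acyclic_pi_finite hA
  have hFB : B.Pi.Finite := acyclic_pi_finite hB
  have hnod : ∀ π ∈ A.Pi, pathδ B.δ B.root π = some (h (nod A π)) := by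
    intro π hπ
    have := pathδ_morph ⟨hroot, hQ, hθ, hδ⟩ (nod_spec hπ)
    rwa [hroot] at this
  have hsub : A.Pi ⊆ B.Pi := fun π hπ => by simp [TFS.Pi, hnod π hπ]
  have hnodB : ∀ π ∈ A.Pi, nod B π = h (nod A π) := by
    intro π hπ
    simp [nod, hnod π hπ]
  have hTh : ∀ C : TFS Nodes Feats, Theta r θ C = ∑ᶠ π ∈ C.Pi, tmfun r θ C π :=
    fun C => rfl
  have htmA : ∀ π ∈ A.Pi, tmfun r θ A π = r (θ (nod A π)) := by
    intro π hπ
    simp [tmfun, nod_spec hπ]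
  have htmB : ∀ π ∈ B.Pi, tmfun r θ B π = r (θ (nod B π)) := by
    intro π hπ
    simp [tmfun, nod_spec hπ]
  have htmle : ∀ π ∈ A.Pi, tmfun r θ A π ≤ tmfun r θ B π := by
    intro π hπ
    rw [htmA π hπ, htmB π (hsub hπ), hnodB π hπ]
    exact hrle _ _ (hθ _ (nod_mem hπ))
  have hTA : Theta r θ A = ∑ π ∈ hFA.toFinset, tmfun r θ A π := by
    rw [hTh]
    exact finsum_mem_eq_finite_toFinset_sum _ hFA
  have hTB : Theta r θ B = ∑ π ∈ hFB.toFinset, tmfun r θ B π := by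
    rw [hTh]
    exact finsum_mem_eq_finite_toFinset_sum _ hFB
  have hsubF : hFA.toFinset ⊆ hFB.toFinset := by
    intro π hπ
    simp only [Set.Finite.mem_toFinset] at hπ ⊢
    exact hsub hπ
  have hTheta_le : Theta r θ A ≤ Theta r θ B := by
    rw [hTA, hTB]
    calc ∑ π ∈ hFA.toFinset, tmfun r θ A π
        ≤ ∑ π ∈ hFA.toFinset, tmfun r θ B π :=
          Finset.sum_le_sum (fun π hπ => htmle π (hFA.mem_toFinset.mp hπ))
      _ ≤ ∑ π ∈ hFB.toFinset, tmfun r θ B π :=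
          Finset.sum_le_sum_of_subset hsubF
  have hPi_le : A.Pi.ncard ≤ B.Pi.ncard := Set.ncard_le_ncard hsub hFB
  have himgA : nod A '' A.Pi = ↑A.Q := nod_image A
  have himgB : nod B '' B.Pi = ↑B.Q := nod_image B
  have hdelta : A.Pi.ncard + B.Q.card ≤ B.Pi.ncard + A.Q.card := by
    have h1 : (↑B.Q : Set Nodes) ⊆ (h '' ↑A.Q) ∪ nod B '' (B.Pi \ A.Pi) := by
      intro q hq
      rw [← himgB] at hq
      obtain ⟨π, hπ, rfl⟩ := hq
      by_cases hπA : π ∈ A.Pi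
      · left
        rw [hnodB π hπA]
        exact ⟨nod A π, nod_mem hπA, rfl⟩
      · right
        exact ⟨π, ⟨hπ, hπA⟩, rfl⟩
    have h2 : B.Q.card ≤ A.Q.card + (B.Pi \ A.Pi).ncard := by
      calc B.Q.card = (↑B.Q : Set Nodes).ncard := (Set.ncard_coe_finset _).symm
        _ ≤ ((h '' ↑A.Q) ∪ nod B '' (B.Pi \ A.Pi)).ncard :=
            Set.ncard_le_ncard h1 ((A.Q.finite_toSet.image h).union ((hFB.diff).image _))
        _ ≤ (h '' ↑A.Q).ncard + (nod B '' (B.Pi \ A.Pi)).ncard := Set.ncard_union_le _ _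
        _ ≤ A.Q.card + (B.Pi \ A.Pi).ncard := by
            refine add_le_add ?_ ?_
            · rw [← Set.ncard_coe_finset A.Q]
              exact Set.ncard_image_le A.Q.finite_toSet
            · exact Set.ncard_image_le (hFB.diff)
    have h3 : (B.Pi \ A.Pi).ncard + A.Pi.ncard = B.Pi.ncard :=
      Set.ncard_diff_add_ncard_of_subset hsub hFB
    omega
  by_contra hcon
  push_neg at hcon
  have e1 : A.Pi.ncard = B.Pi.ncard := by
    simp only [rank] at hcon
    omega
  have e2 : Theta r θ A = Theta r θ B := by
    simp only [rank] at hcon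
    omega
  have e3 : A.Q.card = B.Q.card := by
    simp only [rank] at hcon
    omega
  have hPiEq : A.Pi = B.Pi := Set.eq_of_subset_of_ncard_le hsub e1.ge hFB
  have hFin_eq : hFA.toFinset = hFB.toFinset := by
    ext π
    simp [hPiEq]
  rw [hTA, hTB, hFin_eq] at e2
  have hpt : ∀ π ∈ hFB.toFinset, tmfun r θ A π = tmfun r θ B π := by
    refine (Finset.sum_eq_sum_iff_of_le ?_).mp e2
    intro π hπ
    exact htmle π (by rw [hPiEq]; exact hFB.mem_toFinset.mp hπ)
  have hθeq : ∀ p ∈ A.Q, θ (h p) = θ p := by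
    intro p hp
    obtain ⟨π, hπ⟩ := A.reach p hp
    have hπA : π ∈ A.Pi := by simp [TFS.Pi, hπ]
    have hnodA : nod A π = p := by simp [nod, hπ]
    have hπF : π ∈ hFB.toFinset := by
      rw [Set.Finite.mem_toFinset, ← hPiEq]
      exact hπA
    have hre := hpt π hπF
    rw [htmA π hπA, htmB π (hsub hπA), hnodB π hπA, hnodA] at hre
    by_contra hne
    have hlt : θ p < θ (h p) := lt_of_le_of_ne (hθ p hp) (fun e => hne e.symm)
    exact (hr _ _ hlt).ne hre
  have himgBA : h '' ↑A.Q = ↑B.Q := by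
    calc h '' (↑A.Q : Set Nodes) = h '' (nod A '' A.Pi) := by rw [himgA]
      _ = (fun π => h (nod A π)) '' A.Pi := Set.image_image h (nod A) A.Pi
      _ = nod B '' A.Pi := Set.image_congr (fun π hπ => (hnodB π hπ).symm)
      _ = nod B '' B.Pi := by rw [hPiEq]
      _ = ↑B.Q := himgB
  have hinj : Set.InjOn h ↑A.Q := by
    refine Set.injOn_of_ncard_image_eq ?_ A.Q.finite_toSet
    rw [himgBA, Set.ncard_coe_finset, Set.ncard_coe_finset, e3]
  haveI : Nonempty Nodes := ⟨A.root⟩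
  set g := Function.invFunOn h ↑A.Q with hg
  have hleft : ∀ p ∈ A.Q, g (h p) = p := fun p hp => hinj.leftInvOn_invFunOn hp
  have hgmem : ∀ q ∈ B.Q, g q ∈ A.Q ∧ h (g q) = q := by
    intro q hq
    have hex : ∃ a ∈ (↑A.Q : Set Nodes), h a = q := by
      have : q ∈ h '' ↑A.Q := by
        rw [himgBA]
        exact_mod_cast hq
      obtain ⟨a, ha, rfl⟩ := this
      exact ⟨a, ha, rfl⟩
    exact ⟨Function.invFunOn_mem hex, Function.invFunOn_eq hex⟩
  apply hnot
  refine ⟨g, ?_, ?_, ?_, ?_⟩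
  · rw [← hroot]
    exact hleft A.root A.root_mem
  · intro q hq
    exact (hgmem q hq).1
  · intro q hq
    obtain ⟨hga, hhg⟩ := hgmem q hq
    have := hθeq (g q) hga
    rw [hhg] at this
    exact this.le
  · intro q f q' hBδ
    have hqB : q ∈ B.Q := B.dom q f (by simp [hBδ])
    obtain ⟨hga, hhg⟩ := hgmem q hqB
    obtain ⟨π, hπ⟩ := A.reach (g q) hga
    have hπA : π ∈ A.Pi := by simp [TFS.Pi, hπ]
    have hBpath : pathδ B.δ B.root (π ++ [f]) = some q' := by
      rw [pathδ_append]
      have hb := hnod π hπA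
      have hnp : nod A π = g q := by simp [nod, hπ]
      rw [hb, hnp, hhg]
      simp [pathδ, hBδ]
    have hmemA : (π ++ [f]) ∈ A.Pi := by
      rw [hPiEq]
      simp [TFS.Pi, hBpath]
    have hApath : (pathδ A.δ A.root (π ++ [f])).isSome := hmemA
    rw [pathδ_append, hπ] at hApath
    simp only [Option.bind_some, pathδ] at hApath
    cases hAδ : A.δ (g q) f with
    | none => rw [hAδ] at hApath; simp at hApath
    | some q'' =>
      have hhq : h q'' = q' := by
        have hbb := hδ (g q) f q'' hAδ
        rw [hhg, hBδ] at hbb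
        exact (Option.some.inj hbb).symm
      have hgq' : g q' = q'' := by
        rw [← hhq]
        exact hleft q'' (A.closed (g q) f q'' hAδ)
      rw [hgq']


end Aux

/-- Subsumption of acyclic TFSs is well-founded: there is no infinite
strictly decreasing sequence `A₀ ⊐ A₁ ⊐ A₂ ⊐ ⋯` of acyclic TFSs. -/
theorem acyclic_subsumption_well_founded [Finite Feats] [PartialOrder Types]
    (r : Types → ℕ) (hr : ∀ t t' : Types, t < t' → r t < r t')
    (θ : Nodes → Types) :
    ¬ ∃ A : ℕ → TFS Nodes Feats,
      (∀ i, (A i).Acyclic) ∧ ∀ i, StrictlySubsumes θ (A (i + 1)) (A i) := by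
  rintro ⟨A, hac, hdec⟩
  have key : ∀ i, rank r θ (A (i + 1)) < rank r θ (A i) :=
    fun i => rank_lt_of_strict r hr θ (hac (i + 1)) (hac i) (hdec i)
  have hnn : ∀ i, 0 ≤ rank r θ (A i) := by
    intro i
    have hle : (A i).Q.card ≤ (A i).Pi.ncard :=
      card_le_pi_ncard (acyclic_pi_finite (hac i))
    simp only [rank]
    omega
  set f : ℕ → ℕ := fun i => (rank r θ (A i)).toNat with hf
  have hfd : ∀ i, f (i + 1) < f i := by
    intro i
    have h1 := key i
    have h2 := hnn (i + 1)
    have h3 := hnn i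
    simp only [hf]
    omega
  have hb : ∀ i, f i + i ≤ f 0 := by
    intro i
    induction i with
    | zero => omega
    | succ n ih => have := hfd n; omega
  have := hb (f 0 + 1)
  omega
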